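/- Let G be the complete bipartite graph with parts {1,...,p} and {p+1,...,p+q}, edges {i, p+j} for 1 ≤ i ≤ p, 1 ≤ j ≤ q. Identify the variables of K[y_1,...,y_{pq}] with a p×q matrix (x_ij), where x_ij corresponds to the edge {i, p+j}. Then the toric ideal I_G (the kernel of the map x_ij ↦ t_i·t_{p+j}) is generated by the set of all 2-minors x_{ij}x_{i'j'} − x_{ij'}x_{i'j} (i < i', j < j') of the matrix X = (x_ij). -/

import Mathlib

open MvPolynomial

noncomputable def edgeMonomial (K : Type*) [Field K] {V : Type*} (e : Sym2 V) :
    MvPolynomial V K :=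
  Sym2.lift ⟨fun i j => X i * X j, fun _ _ => mul_comm _ _⟩ e

noncomputable def toricMap (K : Type*) [Field K] {σ V : Type*} (e : σ → Sym2 V) :
    MvPolynomial σ K →ₐ[K] MvPolynomial V K :=
  aeval fun v => edgeMonomial K (e v)

namespace BT

variable (K : Type*) [Field K] {p q : ℕ}

def mSet (K : Type*) [Field K] (p q : ℕ) : Set (MvPolynomial (Fin p × Fin q) K) :=
  {f | ∃ (i i' : Fin p) (j j' : Fin q), i < i' ∧ j < j' ∧
    f = X (i, j) * X (i', j') - X (i, j') * X (i', j)}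

noncomputable def phi (K : Type*) [Field K] (p q : ℕ) :
    MvPolynomial (Fin p × Fin q) K →ₐ[K] MvPolynomial (Fin p ⊕ Fin q) K :=
  toricMap K (fun ij : Fin p × Fin q => s(Sum.inl ij.1, Sum.inr ij.2))

noncomputable def margin (A : (Fin p × Fin q) →₀ ℕ) : (Fin p ⊕ Fin q) →₀ ℕ :=
  Finsupp.equivFunOnFinite.symm
    (Sum.elim (fun i => ∑ j, A (i, j)) (fun j => ∑ i, A (i, j)))

lemma margin_inl (A : (Fin p × Fin q) →₀ ℕ) (i : Fin p) :
    margin A (Sum.inl i) = ∑ j, A (i, j) := rfl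

lemma margin_inr (A : (Fin p × Fin q) →₀ ℕ) (j : Fin q) :
    margin A (Sum.inr j) = ∑ i, A (i, j) := rfl

lemma margin_add (A B : (Fin p × Fin q) →₀ ℕ) :
    margin (A + B) = margin A + margin B := by
  ext v; cases v <;> simp [margin_inl, margin_inr, Finset.sum_add_distrib]

lemma margin_zero : margin (0 : (Fin p × Fin q) →₀ ℕ) = 0 := by
  ext v; cases v <;> simp [margin_inl, margin_inr]

lemma margin_single (i : Fin p) (j : Fin q) (n : ℕ) :
    margin (Finsupp.single (i, j) n) =
      Finsupp.single (Sum.inl i) n + Finsupp.single (Sum.inr j) n := by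
  ext v
  cases v with
  | inl a =>
    simp only [margin_inl, Finsupp.single_apply, Finsupp.add_apply, Prod.mk.injEq,
      Finsupp.coe_add, Pi.add_apply, Sum.inl.injEq, Sum.inr.injEq, reduceCtorEq,
      if_false, add_zero, Prod.ext_iff]
    by_cases hi : i = a <;> simp [hi]
  | inr b =>
    simp only [margin_inr, Finsupp.single_apply, Finsupp.add_apply, Prod.mk.injEq,
      Finsupp.coe_add, Pi.add_apply, Sum.inl.injEq, Sum.inr.injEq, reduceCtorEq,
      if_false, zero_add, Prod.ext_iff]
    by_cases hj : j = b <;> simp [hj]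

lemma margin_eq_zero {B : (Fin p × Fin q) →₀ ℕ} (h : margin B = 0) : B = 0 := by
  ext a
  obtain ⟨i, j⟩ := a
  have h1 : (∑ j', B (i, j')) = 0 := by
    have := congrArg (fun f => f (Sum.inl i)) h
    simpa [margin_inl] using this
  exact Finset.sum_eq_zero_iff.mp h1 j (Finset.mem_univ _)

lemma phi_X (i : Fin p) (j : Fin q) :
    phi K p q (X (i, j)) = X (Sum.inl i) * X (Sum.inr j) := by
  simp [phi, toricMap, edgeMonomial]

lemma phi_monomial (A : (Fin p × Fin q) →₀ ℕ) :
    phi K p q (monomial A (1 : K)) = monomial (margin A) 1 := by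
  induction A using Finsupp.induction with
  | zero => simp [margin_zero]
  | single_add a n f han hn ih =>
    obtain ⟨i, j⟩ := a
    have hsplit : (monomial (Finsupp.single (i, j) n + f) (1 : K)) =
        monomial (Finsupp.single (i, j) n) 1 * monomial f 1 := by
      rw [monomial_mul, one_mul]
    rw [hsplit, map_mul, ih, margin_add, margin_single]
    have h1 : phi K p q (monomial (Finsupp.single (i, j) n) (1 : K)) =
        monomial (Finsupp.single (Sum.inl i) n + Finsupp.single (Sum.inr j) n) 1 := by
      rw [← X_pow_eq_monomial, map_pow, phi_X, mul_pow, X_pow_eq_monomial,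
        X_pow_eq_monomial, monomial_mul, one_mul]
    rw [h1, monomial_mul, one_mul]

lemma minor_mem (i i' : Fin p) (j j' : Fin q) (hi : i ≠ i') (hj : j ≠ j') :
    X (i, j) * X (i', j') - X (i, j') * X (i', j) ∈ Ideal.span (mSet K p q) := by
  rcases hi.lt_or_gt with h1 | h1 <;> rcases hj.lt_or_gt with h2 | h2
  · exact Ideal.subset_span ⟨i, i', j, j', h1, h2, rfl⟩
  · have hmem : (X (i, j') * X (i', j) - X (i, j) * X (i', j') :
        MvPolynomial (Fin p × Fin q) K) ∈ mSet K p q := ⟨i, i', j', j, h1, h2, rfl⟩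
    have h := neg_mem (Ideal.subset_span hmem (s := mSet K p q))
    convert h using 1; ring
  · have hmem : (X (i', j) * X (i, j') - X (i', j') * X (i, j) :
        MvPolynomial (Fin p × Fin q) K) ∈ mSet K p q := ⟨i', i, j, j', h1, h2, rfl⟩
    have h := neg_mem (Ideal.subset_span hmem (s := mSet K p q))
    convert h using 1; ring
  · have hmem : (X (i', j') * X (i, j) - X (i', j) * X (i, j') :
        MvPolynomial (Fin p × Fin q) K) ∈ mSet K p q := ⟨i', i, j', j, h1, h2, rfl⟩
    have h : (X (i', j') * X (i, j) - X (i', j) * X (i, j') : MvPolynomial (Fin p × Fin q) K) ∈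
        Ideal.span (mSet K p q) := Ideal.subset_span hmem (s := mSet K p q)
    convert h using 1; ring

lemma monomial_add_single' (D : (Fin p × Fin q) →₀ ℕ) (a : Fin p × Fin q) :
    (monomial (D + Finsupp.single a 1) (1 : K)) = monomial D 1 * X a := by
  rw [monomial_add_single, pow_one]

lemma adjust (B : (Fin p × Fin q) →₀ ℕ) (i : Fin p) (j : Fin q)
    (hrow : margin B (Sum.inl i) ≠ 0) (hcol : margin B (Sum.inr j) ≠ 0) :
    ∃ C : (Fin p × Fin q) →₀ ℕ, margin C = margin B ∧ C (i, j) ≠ 0 ∧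
      monomial C (1 : K) - monomial B 1 ∈ Ideal.span (mSet K p q) := by
  by_cases hB : B (i, j) ≠ 0
  · exact ⟨B, rfl, hB, by simp⟩
  push_neg at hB
  rw [margin_inl] at hrow
  rw [margin_inr] at hcol
  obtain ⟨j', -, hj'⟩ := Finset.exists_ne_zero_of_sum_ne_zero hrow
  obtain ⟨i', -, hi'⟩ := Finset.exists_ne_zero_of_sum_ne_zero hcol
  have hjj : j' ≠ j := by rintro rfl; exact hj' hB
  have hii : i' ≠ i := by rintro rfl; exact hi' hB
  set s1 : (Fin p × Fin q) →₀ ℕ := Finsupp.single (i, j') 1 with hs1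
  set s2 : (Fin p × Fin q) →₀ ℕ := Finsupp.single (i', j) 1 with hs2
  have hle : s1 + s2 ≤ B := by
    rw [Finsupp.le_def]
    intro a
    rcases eq_or_ne a (i, j') with rfl | ha1
    · have : s2 (i, j') = 0 := by
        rw [hs2, Finsupp.single_apply_eq_zero]
        intro h; exact (hii (congrArg Prod.fst h).symm).elim
      simp [this, hs1, Nat.one_le_iff_ne_zero, hj']
    · rcases eq_or_ne a (i', j) with rfl | ha2
      · have : s1 (i', j) = 0 := by
          rw [hs1, Finsupp.single_apply_eq_zero]
          intro h; exact (hii (congrArg Prod.fst h)).elim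
        simp [this, hs2, Nat.one_le_iff_ne_zero, hi']
      · have e1 : s1 a = 0 := Finsupp.single_eq_of_ne' (by exact fun h => ha1 h.symm)
        have e2 : s2 a = 0 := Finsupp.single_eq_of_ne' (by exact fun h => ha2 h.symm)
        simp [e1, e2]
  set D : (Fin p × Fin q) →₀ ℕ := B - (s1 + s2) with hD
  have hBD : D + s1 + s2 = B := by
    rw [add_assoc, hD, tsub_add_cancel_of_le hle]
  set C : (Fin p × Fin q) →₀ ℕ := D + Finsupp.single (i, j) 1 + Finsupp.single (i', j') 1
    with hC
  refine ⟨C, ?_, ?_, ?_⟩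
  · rw [hC, ← hBD, hs1, hs2]
    simp only [margin_add, margin_single]
    abel
  · have : C (i, j) = D (i, j) + (Finsupp.single (i, j) 1 : (Fin p × Fin q) →₀ ℕ) (i, j)
        + (Finsupp.single (i', j') 1 : (Fin p × Fin q) →₀ ℕ) (i, j) := by
      rw [hC]; simp
    rw [this]
    simp
  · have hCmon : monomial C (1 : K) = monomial D 1 * X (i, j) * X (i', j') := by
      rw [hC, monomial_add_single' K, monomial_add_single' K]
    have hBmon : monomial B (1 : K) = monomial D 1 * X (i, j') * X (i', j) := by
      rw [← hBD, monomial_add_single' K, monomial_add_single' K]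
    have h := Ideal.mul_mem_left (Ideal.span (mSet K p q)) (monomial D 1)
      (minor_mem K i i' j j' hii.symm hjj.symm)
    convert h using 1
    rw [hCmon, hBmon]; ring

lemma sum_le_of_single {A : (Fin p × Fin q) →₀ ℕ} (a : Fin p × Fin q) :
    A a ≤ A.sum fun _ k => k := by
  by_cases h : a ∈ A.support
  · exact Finset.single_le_sum (fun _ _ => Nat.zero_le _) h
  · simp [Finsupp.notMem_support_iff.mp h]

lemma binomial_mem : ∀ (n : ℕ) (A B : (Fin p × Fin q) →₀ ℕ),
    (A.sum fun _ k => k) ≤ n → margin A = margin B →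
    monomial A (1 : K) - monomial B 1 ∈ Ideal.span (mSet K p q) := by
  intro n
  induction n with
  | zero =>
    intro A B hA hm
    have hA0 : A = 0 := by
      ext a
      simp only [Finsupp.coe_zero, Pi.zero_apply]
      have := sum_le_of_single (A := A) a
      omega
    rw [hA0] at hm
    have hB0 : B = 0 := margin_eq_zero (hm.symm.trans margin_zero)
    rw [hA0, hB0]
    simp
  | succ n ih =>
    intro A B hA hm
    by_cases hA0 : A = 0
    · rw [hA0] at hm
      rw [hA0, margin_eq_zero (hm.symm.trans margin_zero)]
      simp
    obtain ⟨a, ha⟩ := Finsupp.support_nonempty_iff.mpr hA0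
    obtain ⟨i, j⟩ := a
    have hAij : A (i, j) ≠ 0 := Finsupp.mem_support_iff.mp ha
    have hrow : margin B (Sum.inl i) ≠ 0 := by
      rw [← hm, margin_inl]
      have : A (i, j) ≤ ∑ j', A (i, j') :=
        Finset.single_le_sum (f := fun j' => A (i, j')) (fun _ _ => Nat.zero_le _)
          (Finset.mem_univ j)
      omega
    have hcol : margin B (Sum.inr j) ≠ 0 := by
      rw [← hm, margin_inr]
      have : A (i, j) ≤ ∑ i', A (i', j) :=
        Finset.single_le_sum (f := fun i' => A (i', j)) (fun _ _ => Nat.zero_le _)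
          (Finset.mem_univ i)
      omega
    obtain ⟨C, hCm, hCij, hCB⟩ := adjust K B i j hrow hcol
    set s : (Fin p × Fin q) →₀ ℕ := Finsupp.single (i, j) 1 with hs
    have hsA : s ≤ A := Finsupp.single_le_iff.mpr (Nat.one_le_iff_ne_zero.mpr hAij)
    have hsC : s ≤ C := Finsupp.single_le_iff.mpr (Nat.one_le_iff_ne_zero.mpr hCij)
    have hA1 : (A - s) + s = A := tsub_add_cancel_of_le hsA
    have hC1 : (C - s) + s = C := tsub_add_cancel_of_le hsC
    have hmar : margin (A - s) = margin (C - s) := by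
      have : margin (A - s) + margin s = margin (C - s) + margin s := by
        rw [← margin_add, ← margin_add, hA1, hC1, hm, hCm]
      exact add_right_cancel this
    have hdeg : ((A - s).sum fun _ k => k) ≤ n := by
      have hsum : ((A - s).sum fun _ k => k) + (s.sum fun _ k => k)
          = A.sum fun _ k => k := by
        rw [← Finsupp.sum_add_index' (fun _ => rfl) (fun _ _ _ => rfl), hA1]
      have hssum : (s.sum fun _ k => k) = 1 := by
        rw [hs, Finsupp.sum_single_index rfl]
      omega
    have hJ1 := ih (A - s) (C - s) hdeg hmar
    have eA : monomial A (1 : K) = monomial (A - s) 1 * X (i, j) := by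
      conv_lhs => rw [← hA1]
      rw [hs, monomial_add_single' K]
    have eC : monomial C (1 : K) = monomial (C - s) 1 * X (i, j) := by
      conv_lhs => rw [← hC1]
      rw [hs, monomial_add_single' K]
    have h2 : monomial A (1 : K) - monomial C 1 ∈ Ideal.span (mSet K p q) := by
      have h := Ideal.mul_mem_left (Ideal.span (mSet K p q)) (X (i, j)) hJ1
      rw [eA, eC]
      convert h using 1
      ring
    have := Ideal.add_mem _ h2 hCB
    rwa [sub_add_sub_cancel] at this

lemma phi_apply (f : MvPolynomial (Fin p × Fin q) K) :
    phi K p q f = ∑ A ∈ f.support, (coeff A f) • monomial (margin A) (1 : K) := by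
  conv_lhs => rw [← support_sum_monomial_coeff f]
  rw [map_sum]
  refine Finset.sum_congr rfl fun A hA => ?_
  have : (monomial A (coeff A f)) = coeff A f • monomial A (1 : K) := by
    rw [smul_monomial, smul_eq_mul, mul_one]
  rw [this, map_smul, phi_monomial]

lemma coeff_phi (f : MvPolynomial (Fin p × Fin q) K) (m : (Fin p ⊕ Fin q) →₀ ℕ) :
    coeff m (phi K p q f) =
      ∑ A ∈ f.support.filter (fun A => margin A = m), coeff A f := by
  rw [phi_apply, coeff_sum, Finset.sum_filter]
  refine Finset.sum_congr rfl fun A hA => ?_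
  rw [coeff_smul, coeff_monomial]
  by_cases h : margin A = m <;> simp [h]

lemma ker_aux : ∀ (n : ℕ) (f : MvPolynomial (Fin p × Fin q) K),
    f.support.card ≤ n → phi K p q f = 0 → f ∈ Ideal.span (mSet K p q) := by
  intro n
  induction n with
  | zero =>
    intro f hf _
    have : f.support = ∅ := Finset.card_eq_zero.mp (Nat.le_zero.mp hf)
    rw [support_eq_empty.mp this]
    exact zero_mem _
  | succ n ih =>
    intro f hcard hker
    by_cases hf0 : f = 0
    · rw [hf0]; exact zero_mem _
    obtain ⟨A, hA⟩ : f.support.Nonempty := MvPolynomial.support_nonempty.mpr hf0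
    have hAc : coeff A f ≠ 0 := mem_support_iff.mp hA
    have hsum0 : ∑ A' ∈ f.support.filter (fun A' => margin A' = margin A), coeff A' f
        = 0 := by
      rw [← coeff_phi, hker, coeff_zero]
    have hAfil : A ∈ f.support.filter (fun A' => margin A' = margin A) :=
      Finset.mem_filter.mpr ⟨hA, rfl⟩
    obtain ⟨A', hA'fil, hA'ne⟩ :
        ∃ A' ∈ f.support.filter (fun A' => margin A' = margin A), A' ≠ A := by
      by_contra hcon
      push_neg at hcon
      have : f.support.filter (fun A' => margin A' = margin A) = {A} :=
        Finset.eq_singleton_iff_unique_mem.mpr ⟨hAfil, hcon⟩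
      rw [this, Finset.sum_singleton] at hsum0
      exact hAc hsum0
    obtain ⟨hA'supp, hA'm⟩ := Finset.mem_filter.mp hA'fil
    set c := coeff A f with hc
    set b : MvPolynomial (Fin p × Fin q) K := monomial A 1 - monomial A' 1 with hb
    have hbJ : b ∈ Ideal.span (mSet K p q) :=
      binomial_mem K _ A A' le_rfl hA'm.symm
    have hbker : phi K p q b = 0 := by
      rw [hb, map_sub, phi_monomial, phi_monomial, hA'm, sub_self]
    set g : MvPolynomial (Fin p × Fin q) K := f - c • b with hg
    have hgker : phi K p q g = 0 := by
      rw [hg, map_sub, map_smul, hbker, smul_zero, sub_zero, hker]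
    have hcoeffg : ∀ B, coeff B g = coeff B f -
        c * ((if A = B then 1 else 0) - (if A' = B then 1 else 0)) := by
      intro B
      rw [hg, hb, coeff_sub, coeff_smul, coeff_sub, coeff_monomial, coeff_monomial]
      simp only [smul_eq_mul]
    have hgsupp : g.support ⊆ f.support.erase A := by
      intro B hB
      have hBg : coeff B g ≠ 0 := mem_support_iff.mp hB
      rw [hcoeffg B] at hBg
      rcases eq_or_ne A B with rfl | hAB
      · exfalso
        apply hBg
        rw [if_pos rfl, if_neg hA'ne]
        ring
      · refine Finset.mem_erase.mpr ⟨fun h => hAB h.symm, ?_⟩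
        rcases eq_or_ne A' B with rfl | hA'B
        · exact hA'supp
        · rw [if_neg hAB, if_neg hA'B] at hBg
          simp only [sub_zero, mul_zero] at hBg
          exact mem_support_iff.mpr (by simpa using hBg)
    have hgcard : g.support.card ≤ n := by
      have h1 : (f.support.erase A).card < f.support.card :=
        Finset.card_erase_lt_of_mem hA
      have h2 : g.support.card ≤ (f.support.erase A).card :=
        Finset.card_le_card hgsupp
      omega
    have hgJ := ih g hgcard hgker
    have : f = g + c • b := by rw [hg]; ring
    rw [this]
    refine Ideal.add_mem _ hgJ ?_
    rw [smul_eq_C_mul]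
    exact Ideal.mul_mem_left _ _ hbJ

end BT

theorem stmt3 (K : Type*) [Field K] (p q : ℕ) (hp : 0 < p) (hq : 0 < q) :
    RingHom.ker (toricMap K
        (fun ij : Fin p × Fin q => s(Sum.inl ij.1, Sum.inr ij.2) :
          Fin p × Fin q → Sym2 (Fin p ⊕ Fin q))).toRingHom =
      Ideal.span {f : MvPolynomial (Fin p × Fin q) K |
        ∃ (i i' : Fin p) (j j' : Fin q), i < i' ∧ j < j' ∧
          f = X (i, j) * X (i', j') - X (i, j') * X (i', j)} := by
  apply le_antisymm
  · intro f hf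
    have hker : BT.phi K p q f = 0 := by
      have := RingHom.mem_ker.mp hf
      exact this
    exact BT.ker_aux K f.support.card f le_rfl hker
  · rw [Ideal.span_le]
    rintro f ⟨i, i', j, j', hi, hj, rfl⟩
    have : BT.phi K p q (X (i, j) * X (i', j') - X (i, j') * X (i', j)) = 0 := by
      rw [map_sub, map_mul, map_mul, BT.phi_X, BT.phi_X, BT.phi_X, BT.phi_X]
      ring
    exact RingHom.mem_ker.mpr this
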